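/- If P is an optimal (minimum-cost) alignment of x and y, and the box I×J is compatible with P (i.e., P passes through the points (min(I)-1, min(J)-1) and (max(I), max(J))), then the restriction of P to the box I×J is an optimal alignment for the edit-distance subproblem on the substrings x_I and y_J. -/

import Mathlib

/-- A single step in the edit-distance grid: horizontal, vertical, or diagonal. -/
def GridStep (p q : ℕ × ℕ) : Prop :=
  (q.1 = p.1 + 1 ∧ q.2 = p.2) ∨ (q.1 = p.1 ∧ q.2 = p.2 + 1) ∨
    (q.1 = p.1 + 1 ∧ q.2 = p.2 + 1)

/-- The list of (directed) edges of a path given as a list of vertices. -/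
def pathEdges (P : List (ℕ × ℕ)) : List ((ℕ × ℕ) × (ℕ × ℕ)) := P.zip P.tail

/-- A spanning path (alignment) of `Grid(x,y)`. -/
def IsSpanningPath (m n : ℕ) (P : List (ℕ × ℕ)) : Prop :=
  P.head? = some (0, 0) ∧ P.getLast? = some (m, n) ∧ P.Chain' GridStep

/-- An edge is costly unless it is a diagonal edge `(i,j) → (i+1,j+1)` with
`x_{i+1} = y_{j+1}`. -/
def IsCostly {α : Type*} (x y : List α) (e : (ℕ × ℕ) × (ℕ × ℕ)) : Prop :=
  ¬ (e.2.1 = e.1.1 + 1 ∧ e.2.2 = e.1.2 + 1 ∧ x[e.1.1]? = y[e.1.2]?)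

instance {α : Type*} [DecidableEq α] (x y : List α) (e : (ℕ × ℕ) × (ℕ × ℕ)) :
    Decidable (IsCostly x y e) := by unfold IsCostly; infer_instance

/-- The cost of a path: its number of costly edges. -/
def pathCost {α : Type*} [DecidableEq α] (x y : List α) (P : List (ℕ × ℕ)) : ℕ :=
  (pathEdges P).countP (fun e => decide (IsCostly x y e))

/-- The restriction of a path `P` to the box `(a,b] × (c,d]`, shifted so that it becomes
a path of the grid of the substrings `x_{(a,b]}` and `y_{(c,d]}`. -/
def restrictShift (a b c d : ℕ) (P : List (ℕ × ℕ)) : List (ℕ × ℕ) :=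
  (P.filter (fun p => decide (a ≤ p.1 ∧ p.1 ≤ b ∧ c ≤ p.2 ∧ p.2 ≤ d))).map
    (fun p => (p.1 - a, p.2 - c))

/-- Componentwise monotone relation, with strictly increasing coordinate sum. -/
private def Mono (p q : ℕ × ℕ) : Prop :=
  p.1 ≤ q.1 ∧ p.2 ≤ q.2 ∧ p.1 + p.2 < q.1 + q.2

private lemma gridStep_mono {p q : ℕ × ℕ} (h : GridStep p q) : Mono p q := by
  obtain ⟨p1, p2⟩ := p; obtain ⟨q1, q2⟩ := q
  simp only [GridStep, Mono] at *; omega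

private instance : IsTrans (ℕ × ℕ) Mono := by
  constructor
  intro p q r h₁ h₂
  simp only [Mono] at *
  omega

private lemma chain'_pairwise {l : List (ℕ × ℕ)} (h : l.Chain' GridStep) :
    l.Pairwise Mono :=
  List.isChain_iff_pairwise.mp (h.imp fun _ _ hg => gridStep_mono hg)

private lemma mem_of_head? {l : List (ℕ × ℕ)} {h₀ p : ℕ × ℕ} (hh : l.head? = some h₀)
    (hpw : l.Pairwise Mono) (hp : p ∈ l) : p = h₀ ∨ Mono h₀ p := by
  cases l with
  | nil => simp at hh
  | cons q t =>
    simp only [List.head?_cons, Option.some.injEq] at hh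
    subst hh
    rcases List.mem_cons.mp hp with rfl | hp
    · exact Or.inl rfl
    · exact Or.inr ((List.pairwise_cons.mp hpw).1 _ hp)

private lemma mem_of_getLast? {l : List (ℕ × ℕ)} {t₀ p : ℕ × ℕ} (ht : l.getLast? = some t₀)
    (hpw : l.Pairwise Mono) (hp : p ∈ l) : p = t₀ ∨ Mono p t₀ := by
  obtain ⟨l', rfl⟩ := List.getLast?_eq_some_iff.mp ht
  rcases List.mem_append.mp hp with hp | hp
  · exact Or.inr ((List.pairwise_append.mp hpw).2.2 _ hp _ (List.mem_singleton_self _))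
  · exact Or.inl (List.mem_singleton.mp hp)

/-- All elements of a grid path lie between its endpoints. -/
private lemma mem_between {l : List (ℕ × ℕ)} {h₀ t₀ p : ℕ × ℕ} (hc : l.Chain' GridStep)
    (hh : l.head? = some h₀) (ht : l.getLast? = some t₀) (hp : p ∈ l) :
    h₀.1 ≤ p.1 ∧ p.1 ≤ t₀.1 ∧ h₀.2 ≤ p.2 ∧ p.2 ≤ t₀.2 := by
  have hpw := chain'_pairwise hc
  have h1 := mem_of_head? hh hpw hp
  have h2 := mem_of_getLast? ht hpw hp
  unfold Mono at h1 h2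
  rcases h1 with rfl | h1 <;> rcases h2 with rfl | h2 <;> omega

private lemma head?_mem' {β : Type*} {l : List β} {u : β} (h : l.head? = some u) : u ∈ l := by
  cases l with
  | nil => simp at h
  | cons v t =>
    simp only [List.head?_cons, Option.some.injEq] at h
    subst h; exact List.mem_cons_self

private lemma getLast?_mem' {β : Type*} {l : List β} {u : β} (h : l.getLast? = some u) :
    u ∈ l := by
  obtain ⟨l', rfl⟩ := List.getLast?_eq_some_iff.mp h
  simp

private lemma pathEdges_cons_cons (p q : ℕ × ℕ) (l : List (ℕ × ℕ)) :
    pathEdges (p :: q :: l) = (p, q) :: pathEdges (q :: l) := rfl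

private lemma pathEdges_append : ∀ (l : List (ℕ × ℕ)) (a : ℕ × ℕ) (r : List (ℕ × ℕ)),
    pathEdges (l ++ a :: r) = pathEdges (l ++ [a]) ++ pathEdges (a :: r) := by
  intro l
  induction l with
  | nil => intro a r; simp [pathEdges]
  | cons p l ih =>
    intro a r
    cases l with
    | nil => simp [pathEdges_cons_cons, pathEdges]
    | cons q l' =>
      have := ih a r
      simp only [List.cons_append, pathEdges_cons_cons] at *
      rw [this]

private lemma pathCost_append {α : Type*} [DecidableEq α] (x y : List α)
    (l : List (ℕ × ℕ)) (a : ℕ × ℕ) (r : List (ℕ × ℕ)) :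
    pathCost x y (l ++ a :: r) = pathCost x y (l ++ [a]) + pathCost x y (a :: r) := by
  unfold pathCost
  rw [pathEdges_append, List.countP_append]

/-- Decomposition of the cost of a path through a middle segment. -/
private lemma pathCost_decomp {α : Type*} [DecidableEq α] (x y : List α)
    (L M R : List (ℕ × ℕ)) {u v : ℕ × ℕ} (hh : M.head? = some u) (ht : M.getLast? = some v) :
    pathCost x y (L ++ M ++ R) =
      pathCost x y (L ++ [u]) + pathCost x y M + pathCost x y (v :: R) := by
  obtain ⟨M₀, rfl⟩ := List.getLast?_eq_some_iff.mp ht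
  cases M₀ with
  | nil =>
    have h : v = u := by simpa using hh
    rw [← h]
    have e1 : L ++ ([] ++ [v]) ++ R = L ++ (v :: R) := by simp
    rw [e1, pathCost_append x y L v R]
    have e2 : pathCost x y ([] ++ [v]) = 0 := rfl
    rw [e2]
    omega
  | cons u' M₁ =>
    have h : u' = u := by simpa using hh
    rw [← h]
    have e1 : L ++ ((u' :: M₁) ++ [v]) ++ R = L ++ (u' :: (M₁ ++ [v] ++ R)) := by simp
    rw [e1, pathCost_append x y L u' (M₁ ++ [v] ++ R)]
    have e2 : u' :: (M₁ ++ [v] ++ R) = (u' :: M₁) ++ (v :: R) := by simp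
    rw [e2, pathCost_append x y (u' :: M₁) v R]
    omega

private lemma mem_of_pathEdges {l : List (ℕ × ℕ)} {e : (ℕ × ℕ) × (ℕ × ℕ)}
    (he : e ∈ pathEdges l) : e.1 ∈ l ∧ e.2 ∈ l := by
  obtain ⟨e1, e2⟩ := e
  unfold pathEdges at he
  have := List.of_mem_zip he
  exact ⟨this.1, List.mem_of_mem_tail this.2⟩

private lemma pathEdges_map (f : ℕ × ℕ → ℕ × ℕ) (l : List (ℕ × ℕ)) :
    pathEdges (l.map f) = (pathEdges l).map (Prod.map f f) := by
  unfold pathEdges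
  rw [← List.map_tail, List.zip_map]

/-- Shifting a path inside the box `(a,b] × (c,d]` down by `(a,c)` preserves the cost,
computed w.r.t. the corresponding substrings. -/
private lemma pathCost_shift {α : Type*} [DecidableEq α] (x y : List α)
    (a b c d : ℕ) (hbx : b ≤ x.length) (hdy : d ≤ y.length) (N : List (ℕ × ℕ))
    (hN : ∀ p ∈ N, a ≤ p.1 ∧ p.1 ≤ b ∧ c ≤ p.2 ∧ p.2 ≤ d) :
    pathCost ((x.drop a).take (b - a)) ((y.drop c).take (d - c))
        (N.map (fun p => (p.1 - a, p.2 - c))) = pathCost x y N := by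
  unfold pathCost
  rw [pathEdges_map, List.countP_map]
  apply List.countP_congr
  intro e he
  obtain ⟨hp, hq⟩ := mem_of_pathEdges he
  obtain ⟨⟨p1, p2⟩, ⟨q1, q2⟩⟩ := e
  obtain ⟨ha1, hb1, hc1, hd1⟩ := hN _ hp
  obtain ⟨ha2, hb2, hc2, hd2⟩ := hN _ hq
  simp only at ha1 hb1 hc1 hd1 ha2 hb2 hc2 hd2
  simp only [Function.comp_apply, Prod.map_apply, decide_eq_true_eq]
  unfold IsCostly
  simp only [not_iff_not]
  constructor
  · rintro ⟨h1, h2, h3⟩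
    refine ⟨by omega, by omega, ?_⟩
    rw [List.getElem?_take, List.getElem?_take, if_pos (by omega), if_pos (by omega),
      List.getElem?_drop, List.getElem?_drop] at h3
    have e1 : a + (p1 - a) = p1 := by omega
    have e2 : c + (p2 - c) = p2 := by omega
    rwa [e1, e2] at h3
  · rintro ⟨h1, h2, h3⟩
    refine ⟨by omega, by omega, ?_⟩
    rw [List.getElem?_take, List.getElem?_take, if_pos (by omega), if_pos (by omega),
      List.getElem?_drop, List.getElem?_drop]
    have e1 : a + (p1 - a) = p1 := by omega
    have e2 : c + (p2 - c) = p2 := by omega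
    rwa [e1, e2]

private lemma gridStep_shift {a c : ℕ} {p q : ℕ × ℕ} (ha : a ≤ p.1) (hc : c ≤ p.2)
    (h : GridStep p q) : GridStep (p.1 - a, p.2 - c) (q.1 - a, q.2 - c) := by
  obtain ⟨p1, p2⟩ := p; obtain ⟨q1, q2⟩ := q
  simp only [GridStep] at *
  omega

private lemma gridStep_unshift {a c : ℕ} {p q : ℕ × ℕ} (h : GridStep p q) :
    GridStep (p.1 + a, p.2 + c) (q.1 + a, q.2 + c) := by
  obtain ⟨p1, p2⟩ := p; obtain ⟨q1, q2⟩ := q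
  simp only [GridStep] at *
  omega

private lemma chain'_of_mem {l : List (ℕ × ℕ)} {B : ℕ × ℕ → Prop}
    {S : ℕ × ℕ → ℕ × ℕ → Prop} (h : l.Chain' GridStep) (hm : ∀ p ∈ l, B p)
    (himp : ∀ p q, B p → B q → GridStep p q → S p q) : l.Chain' S := by
  induction l with
  | nil => exact List.isChain_nil
  | cons p l ih =>
    cases l with
    | nil => exact List.isChain_singleton _
    | cons q l' =>
      rw [List.Chain', List.isChain_cons_cons] at h ⊢
      exact ⟨himp _ _ (hm _ (by simp)) (hm _ (by simp)) h.1,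
        ih h.2 fun p hp => hm p (List.mem_cons_of_mem _ hp)⟩

theorem restriction_of_optimal_is_optimal {α : Type*} [DecidableEq α] (x y : List α)
    (P : List (ℕ × ℕ))
    (hP : IsSpanningPath x.length y.length P)
    (hopt : ∀ Q, IsSpanningPath x.length y.length Q → pathCost x y P ≤ pathCost x y Q)
    (a b c d : ℕ) (hab : a ≤ b) (hbx : b ≤ x.length) (hcd : c ≤ d) (hdy : d ≤ y.length)
    (hmem1 : (a, c) ∈ P) (hmem2 : (b, d) ∈ P) :
    IsSpanningPath ((x.drop a).take (b - a)).length ((y.drop c).take (d - c)).length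
        (restrictShift a b c d P) ∧
      ∀ Q, IsSpanningPath ((x.drop a).take (b - a)).length ((y.drop c).take (d - c)).length Q →
        pathCost ((x.drop a).take (b - a)) ((y.drop c).take (d - c)) (restrictShift a b c d P) ≤
          pathCost ((x.drop a).take (b - a)) ((y.drop c).take (d - c)) Q := by
  obtain ⟨hPh, hPt, hPc⟩ := hP
  obtain ⟨L, T, rfl⟩ := List.append_of_mem hmem1
  have hpw : (L ++ (a, c) :: T).Pairwise Mono := chain'_pairwise hPc
  have hbd : (b, d) ∈ (a, c) :: T := by
    rcases List.mem_append.mp hmem2 with h | h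
    · exfalso
      have hm := (List.pairwise_append.mp hpw).2.2 _ h (a, c) List.mem_cons_self
      simp [Mono] at hm
      omega
    · exact h
  obtain ⟨M, R, hMR, hMh, hMt⟩ :
      ∃ M R, L ++ (a, c) :: T = L ++ M ++ R ∧ M.head? = some (a, c) ∧
        M.getLast? = some (b, d) := by
    rcases List.mem_cons.mp hbd with h | h
    · exact ⟨[(a, c)], T, by simp, rfl, by simp [h]⟩
    · obtain ⟨M', R', rfl⟩ := List.append_of_mem h
      exact ⟨((a, c) :: M') ++ [(b, d)], R', by simp, by simp,
        List.getLast?_concat⟩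
  rw [hMR] at hPh hPt hPc hopt hpw ⊢
  clear hMR hmem1 hmem2 hbd
  -- chain decomposition:  (L ++ M) ++ R
  have hPc' := hPc
  rw [List.Chain', List.isChain_append] at hPc'
  obtain ⟨hcLM, hcR, hlink2⟩ := hPc'
  rw [List.isChain_append] at hcLM
  obtain ⟨hcL, hcM, hlink1⟩ := hcLM
  -- box facts
  have hboxM : ∀ p ∈ M, a ≤ p.1 ∧ p.1 ≤ b ∧ c ≤ p.2 ∧ p.2 ≤ d := fun p hp =>
    mem_between hcM hMh hMt hp
  have hfailL : ∀ p ∈ L, ¬(a ≤ p.1 ∧ p.1 ≤ b ∧ c ≤ p.2 ∧ p.2 ≤ d) := by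
    intro p hp hbox
    have hpwLM := (List.pairwise_append.mp hpw).1
    have hm := (List.pairwise_append.mp hpwLM).2.2 _ hp (a, c) (head?_mem' hMh)
    simp [Mono] at hm
    omega
  have hfailR : ∀ p ∈ R, ¬(a ≤ p.1 ∧ p.1 ≤ b ∧ c ≤ p.2 ∧ p.2 ≤ d) := by
    intro p hp hbox
    have hm := (List.pairwise_append.mp hpw).2.2 (b, d)
      (List.mem_append_right _ (getLast?_mem' hMt)) _ hp
    simp [Mono] at hm
    omega
  -- the restriction is M, shifted
  have hrs : restrictShift a b c d (L ++ M ++ R) =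
      M.map (fun p => (p.1 - a, p.2 - c)) := by
    unfold restrictShift
    congr 1
    have h1 : L.filter (fun p => decide (a ≤ p.1 ∧ p.1 ≤ b ∧ c ≤ p.2 ∧ p.2 ≤ d)) = [] := by
      rw [List.filter_eq_nil_iff]; intro p hp; simpa using hfailL p hp
    have h2 : M.filter (fun p => decide (a ≤ p.1 ∧ p.1 ≤ b ∧ c ≤ p.2 ∧ p.2 ≤ d)) = M := by
      rw [List.filter_eq_self]; intro p hp; simpa using hboxM p hp
    have h3 : R.filter (fun p => decide (a ≤ p.1 ∧ p.1 ≤ b ∧ c ≤ p.2 ∧ p.2 ≤ d)) = [] := by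
      rw [List.filter_eq_nil_iff]; intro p hp; simpa using hfailR p hp
    rw [List.filter_append, List.filter_append, h1, h2, h3]
    simp
  have hlx : ((x.drop a).take (b - a)).length = b - a := by
    rw [List.length_take, List.length_drop]; omega
  have hly : ((y.drop c).take (d - c)).length = d - c := by
    rw [List.length_take, List.length_drop]; omega
  constructor
  · -- the restriction is a spanning path of the subgrid
    rw [hlx, hly, hrs]
    refine ⟨?_, ?_, ?_⟩
    · rw [List.head?_map, hMh, Option.map_some]; simp
    · rw [List.getLast?_map, hMt, Option.map_some]
    · rw [List.Chain', List.isChain_map]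
      exact chain'_of_mem hcM hboxM fun p q hp hq hg =>
        gridStep_shift hp.1 hp.2.2.1 hg
  · -- optimality
    intro Q hQ
    rw [hlx, hly] at hQ
    obtain ⟨hQh, hQt, hQc⟩ := hQ
    set g : ℕ × ℕ → ℕ × ℕ := fun p => (p.1 + a, p.2 + c) with hg
    have hQbox : ∀ p ∈ Q, p.1 ≤ b - a ∧ p.2 ≤ d - c := fun p hp => by
      have h := mem_between hQc hQh hQt hp
      exact ⟨h.2.1, h.2.2.2⟩
    have hg00 : g (0, 0) = (a, c) := by rw [hg]; simp
    have hgbd : g (b - a, d - c) = (b, d) := by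
      rw [hg]; dsimp only
      rw [Nat.sub_add_cancel hab, Nat.sub_add_cancel hcd]
    have hgh : (Q.map g).head? = some (a, c) := by
      rw [List.head?_map, hQh, Option.map_some, hg00]
    have hgt : (Q.map g).getLast? = some (b, d) := by
      rw [List.getLast?_map, hQt, Option.map_some, hgbd]
    have hcQg : (Q.map g).Chain' GridStep := by
      rw [List.Chain', List.isChain_map]
      exact hQc.imp fun _ _ hstep => gridStep_unshift hstep
    have hspanQ' : IsSpanningPath x.length y.length (L ++ Q.map g ++ R) := by
      refine ⟨?_, ?_, ?_⟩
      · rw [List.head?_append, List.head?_append, hgh]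
        rw [List.head?_append, List.head?_append, hMh] at hPh
        exact hPh
      · rw [List.getLast?_append, List.getLast?_append, hgt]
        rw [List.getLast?_append, List.getLast?_append, hMt] at hPt
        exact hPt
      · rw [List.Chain', List.isChain_append]
        refine ⟨?_, hcR, ?_⟩
        · rw [List.isChain_append]
          refine ⟨hcL, hcQg, ?_⟩
          intro p hp q hq
          rw [hgh] at hq
          have hq' : (a, c) = q := by simpa using hq
          subst hq'
          have hmm : (a, c) ∈ M.head? := by simp [hMh]
          exact hlink1 _ hp _ hmm
        · intro p hp q hq
          rw [List.getLast?_append, hgt] at hp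
          simp only [Option.some_or, Option.mem_def, Option.some.injEq] at hp
          subst hp
          refine hlink2 _ ?_ _ hq
          simp [List.getLast?_append, hMt]
    have hle := hopt _ hspanQ'
    have hdP := pathCost_decomp x y L M R hMh hMt
    have hdQ := pathCost_decomp x y L (Q.map g) R hgh hgt
    have hcostM := pathCost_shift x y a b c d hbx hdy M hboxM
    have hQgbox : ∀ p ∈ Q.map g, a ≤ p.1 ∧ p.1 ≤ b ∧ c ≤ p.2 ∧ p.2 ≤ d := by
      intro p hp
      obtain ⟨q, hq, rfl⟩ := List.mem_map.mp hp
      have h := hQbox q hq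
      simp only [hg]
      omega
    have hcostQ := pathCost_shift x y a b c d hbx hdy (Q.map g) hQgbox
    have hQid : (Q.map g).map (fun p => (p.1 - a, p.2 - c)) = Q := by
      rw [List.map_map]
      have hid : ∀ p ∈ Q, ((fun p : ℕ × ℕ => (p.1 - a, p.2 - c)) ∘ g) p = p := by
        rintro ⟨p1, p2⟩ _
        simp [hg]
      rw [List.map_congr_left hid]
      simp
    rw [hQid] at hcostQ
    rw [hrs, hcostM, hcostQ]
    omega
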